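/- Let 0 ≤ a < b, let α ∈ [0,1], m ∈ (0,1], s ∈ (0,1], let q > 1 with conjugate exponent p = q/(q−1), and let f : ℝ → ℝ be differentiable on an open interval containing [a, b/m] with f' integrable on [a, b]. If |f'|^q is s-(α,m)-convex, i.e. for all x, y ∈ [a, b] and t ∈ [0,1], |f'(t·x + (1−t)·y)|^q ≤ t^{αs} |f'(x)|^q + m (1 − t^{αs}) |f'(y/m)|^q, then |(f(a)+f(b))/2 − (1/(b−a)) ∫_a^b f(x) dx| ≤ ((b−a) / 3^{1/p}) · [ u₁ |f'(a)|^q + u₂ |f'(b/m)|^q ]^{1/q}, where u₁ = ((αs)² + 3αs + 4) / (2 (αs+1)(αs+2)(αs+3)) and u₂ = m (1/3 − u₁). -/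

import Mathlib

open MeasureTheory

set_option maxHeartbeats 1600000 in
/-- Theorem 6: power-mean-type double-integral Hermite–Hadamard estimate for `|f'|^q`
being `s`-`(α,m)`-convex (first sense), `q > 1`, `p = q/(q-1)`. -/
theorem hh_s_alpha_m_convex_power_mean_double (f f' : ℝ → ℝ) (a b α m s p q c d : ℝ)
    (ha : 0 ≤ a) (hab : a < b)
    (hα : α ∈ Set.Icc (0:ℝ) 1) (hm : m ∈ Set.Ioc (0:ℝ) 1) (hs : s ∈ Set.Ioc (0:ℝ) 1)
    (hq : 1 < q) (hp : p = q / (q - 1))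
    (hc : c < a) (hd : b / m < d)
    (hdiff : ∀ x ∈ Set.Ioo c d, HasDerivAt f (f' x) x)
    (hint : IntervalIntegrable f' volume a b)
    (hconv : ∀ x ∈ Set.Icc a b, ∀ y ∈ Set.Icc a b, ∀ t ∈ Set.Icc (0:ℝ) 1,
      |f' (t * x + (1 - t) * y)| ^ q ≤
        t ^ (α * s) * |f' x| ^ q + m * (1 - t ^ (α * s)) * |f' (y / m)| ^ q) :
    |(f a + f b) / 2 - (1 / (b - a)) * ∫ x in a..b, f x| ≤
      ((b - a) / 3 ^ (1 / p)) *
        (((α * s) ^ 2 + 3 * (α * s) + 4) /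
            (2 * (α * s + 1) * (α * s + 2) * (α * s + 3)) * |f' a| ^ q
          + m * (1 / 3 -
              ((α * s) ^ 2 + 3 * (α * s) + 4) /
                (2 * (α * s + 1) * (α * s + 2) * (α * s + 3)))
            * |f' (b / m)| ^ q) ^ (1 / q) := by
  obtain ⟨hm0, hm1⟩ := hm
  have hb0 : 0 < b := lt_of_le_of_lt ha hab
  have hba : (0:ℝ) < b - a := sub_pos.mpr hab
  have hba' : b - a ≠ 0 := ne_of_gt hba
  have hab' : a - b ≠ 0 := ne_of_lt (sub_neg.mpr hab)
  have hbbm : b ≤ b / m := by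
    rw [le_div_iff₀ hm0]; nlinarith
  have hsub : Set.uIcc a b ⊆ Set.Ioo c d := by
    rw [Set.uIcc_of_le hab.le]
    intro x hx
    exact ⟨lt_of_lt_of_le hc hx.1, lt_of_le_of_lt (hx.2.trans hbbm) hd⟩
  have hq0 : 0 < q := lt_trans one_pos hq
  have hqp : q.HolderConjugate p := (Real.holderConjugate_iff_eq_conjExponent hq).mpr hp
  have hpq : p.HolderConjugate q := hqp.symm
  have hp0 : 0 < p := hpq.pos
  set σ := α * s with hσdef
  have hσ0 : 0 ≤ σ := mul_nonneg hα.1 hs.1.le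
  set A := |f' a| ^ q with hAdef
  set B := |f' (b / m)| ^ q with hBdef
  have hA0 : 0 ≤ A := by rw [hAdef]; exact Real.rpow_nonneg (abs_nonneg _) q
  have hB0 : 0 ≤ B := by rw [hBdef]; exact Real.rpow_nonneg (abs_nonneg _) q
  set u₁ := (σ ^ 2 + 3 * σ + 4) / (2 * (σ + 1) * (σ + 2) * (σ + 3)) with hu₁
  set V := u₁ * A + m * (1 / 3 - u₁) * B with hVdef
  set F : ℝ → ℝ := fun t => f' ((a - b) * t + b) with hFdef
  set w : ℝ → ℝ := fun t => t ^ 2 - t + 1/2 with hwdef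
  have hwpos : ∀ t : ℝ, 0 < w t := by
    intro t; simp only [hwdef]; linarith [sq_nonneg (t - 1/2)]
  have hwcont : Continuous w := by
    simp only [hwdef]; continuity
  have hσcont : Continuous fun t : ℝ => t ^ σ := Real.continuous_rpow_const hσ0
  -- pointwise convexity bound
  have hFb : ∀ t ∈ Set.Icc (0:ℝ) 1, |F t| ^ q ≤ t ^ σ * A + m * (1 - t ^ σ) * B := by
    intro t ht
    have h := hconv a (Set.left_mem_Icc.mpr hab.le) b (Set.right_mem_Icc.mpr hab.le) t ht
    have he : t * a + (1 - t) * b = (a - b) * t + b := by ring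
    rw [he] at h
    simp only [hFdef, hAdef, hBdef]
    exact h
  have hFc : ∀ t ∈ Set.Icc (0:ℝ) 1, |F t| ^ q ≤ A + m * B := by
    intro t ht
    have h1 := hFb t ht
    have h2 : t ^ σ ≤ 1 := Real.rpow_le_one ht.1 ht.2 hσ0
    have h3 : 0 ≤ t ^ σ := Real.rpow_nonneg ht.1 _
    linarith [mul_nonneg (sub_nonneg.mpr h2) hA0, mul_nonneg (mul_nonneg hm0.le h3) hB0,
      mul_le_mul_of_nonneg_right h2 hA0, mul_nonneg h3 hB0]
  -- integrability of F
  have hFint : IntervalIntegrable F volume 0 1 := by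
    have h1 := hint.comp_add_right b
    rw [sub_self] at h1
    have h2 := h1.comp_mul_left (c := a - b)
    rw [div_self hab', zero_div] at h2
    exact h2.symm
  -- identity
  set I := ∫ t in (0:ℝ)..1, (1/2 - t) * F t with hIdef
  have hdiff' : ∀ x ∈ Set.uIcc a b, HasDerivAt f (f' x) x := fun x hx => hdiff x (hsub hx)
  have hu : ∀ x ∈ Set.uIcc a b, HasDerivAt (fun y => y - (a+b)/2) ((fun _ : ℝ => (1:ℝ)) x) x :=
    fun x _ => by simpa using (hasDerivAt_id x).sub_const ((a+b)/2)
  have parts := intervalIntegral.integral_mul_deriv_eq_deriv_mul hu hdiff'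
    (intervalIntegrable_const (c := (1:ℝ))) hint
  simp only [one_mul] at parts
  have hsubst : (∫ x in a..b, (x - (a+b)/2) * f' x) = (b - a)^2 * I := by
    have h := intervalIntegral.integral_comp_mul_add (a := (0:ℝ)) (b := 1)
      (fun x => (x - (a+b)/2) * f' x) hab' b
    simp only [mul_zero, zero_add, mul_one, sub_add_cancel, smul_eq_mul] at h
    have e1 : (∫ t in (0:ℝ)..1, ((a-b)*t + b - (a+b)/2) * f' ((a-b)*t + b))
        = (b - a) * I := by
      rw [hIdef, ← intervalIntegral.integral_const_mul]
      apply intervalIntegral.integral_congr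
      intro t _
      simp only [hFdef]
      ring
    rw [e1, intervalIntegral.integral_symm] at h
    rw [show (a - b) = -(b - a) by ring, inv_neg, neg_mul_neg, inv_mul_eq_div,
      eq_div_iff hba'] at h
    rw [← h]
    ring
  have key : (f a + f b) / 2 - (1 / (b - a)) * ∫ x in a..b, f x = (b - a) * I := by
    have h3 : (b - a)^2 * I = (b - (a+b)/2) * f b - (a - (a+b)/2) * f a
        - ∫ x in a..b, f x := hsubst.symm.trans parts
    have h4 : (∫ x in a..b, f x) = (b - a) * (f a + f b) / 2 - (b - a)^2 * I := by
      linarith [h3]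
    rw [h4]
    field_simp
    ring
  clear_value I
  -- measurability
  haveI hμfin : IsFiniteMeasure (volume.restrict (Set.Ioc (0:ℝ) 1)) := by
    constructor
    rw [Measure.restrict_apply_univ]
    simp [Real.volume_Ioc]
  have hFmeas : AEStronglyMeasurable F (volume.restrict (Set.Ioc (0:ℝ) 1)) :=
    hFint.1.aestronglyMeasurable
  have hFqmeas : AEStronglyMeasurable (fun t => |F t| ^ q)
      (volume.restrict (Set.Ioc (0:ℝ) 1)) := by
    have := (Real.continuous_rpow_const hq0.le).comp_aestronglyMeasurable hFmeas.norm
    simpa [Real.norm_eq_abs] using this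
  -- integrability of the various integrands
  have hint1 : IntervalIntegrable (fun t => (1/2 - t) * F t) volume 0 1 :=
    hFint.continuousOn_mul ((continuous_const.sub continuous_id).continuousOn)
  have hint2 : IntervalIntegrable (fun t => w t * |F t|) volume 0 1 :=
    hFint.abs.continuousOn_mul hwcont.continuousOn
  have hΦ : IntervalIntegrable (fun t => w t * |F t| ^ q) volume 0 1 := by
    rw [intervalIntegrable_iff, Set.uIoc_of_le zero_le_one]
    apply Integrable.mono' (integrable_const ((1/2) * (A + m * B)))
    · exact hwcont.aestronglyMeasurable.mul hFqmeas
    · filter_upwards [ae_restrict_mem measurableSet_Ioc] with t ht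
      have ht' : t ∈ Set.Icc (0:ℝ) 1 := Set.Ioc_subset_Icc_self ht
      have h1 : w t ≤ 1/2 := by
        simp only [hwdef]; linarith [mul_nonneg ht'.1 (sub_nonneg.mpr ht'.2)]
      have h2 : 0 ≤ |F t| ^ q := Real.rpow_nonneg (abs_nonneg _) _
      rw [Real.norm_eq_abs, abs_of_nonneg (mul_nonneg (hwpos t).le h2)]
      exact mul_le_mul h1 (hFc t ht') h2 (by norm_num)
  -- Hölder
  have holder : (∫ t in (0:ℝ)..1, w t * |F t|)
      ≤ (∫ t in (0:ℝ)..1, w t) ^ (1/p) * (∫ t in (0:ℝ)..1, w t * |F t| ^ q) ^ (1/q) := by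
    have hmem1 : MemLp (fun t => w t ^ (1/p)) (ENNReal.ofReal p)
        (volume.restrict (Set.Ioc (0:ℝ) 1)) := by
      apply MemLp.of_bound
        (((Real.continuous_rpow_const (by positivity)).comp hwcont).aestronglyMeasurable) 1
      filter_upwards [ae_restrict_mem measurableSet_Ioc] with t ht
      have h1 : w t ≤ 1 := by
        simp only [hwdef]; linarith [mul_nonneg ht.1.le (sub_nonneg.mpr ht.2)]
      simp only [Function.comp_apply, Pi.mul_apply, Real.norm_eq_abs]
      rw [abs_of_nonneg (Real.rpow_nonneg (hwpos t).le _)]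
      exact Real.rpow_le_one (hwpos t).le h1 (by positivity)
    have hmem2 : MemLp (fun t => w t ^ (1/q) * |F t|) (ENNReal.ofReal q)
        (volume.restrict (Set.Ioc (0:ℝ) 1)) := by
      apply MemLp.of_bound
        ((((Real.continuous_rpow_const (by positivity)).comp hwcont).aestronglyMeasurable).mul
          (by simpa [Real.norm_eq_abs] using hFmeas.norm)) ((A + m * B) ^ (1/q))
      filter_upwards [ae_restrict_mem measurableSet_Ioc] with t ht
      have ht' : t ∈ Set.Icc (0:ℝ) 1 := Set.Ioc_subset_Icc_self ht
      have h1 : w t ≤ 1 := by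
        simp only [hwdef]; linarith [mul_nonneg ht.1.le (sub_nonneg.mpr ht.2)]
      have h2 : w t ^ (1/q) ≤ 1 := Real.rpow_le_one (hwpos t).le h1 (by positivity)
      have h3 : |F t| ≤ (A + m * B) ^ (1/q) := by
        have h4 := Real.rpow_le_rpow (Real.rpow_nonneg (abs_nonneg _) q) (hFc t ht')
          (by positivity : (0:ℝ) ≤ 1/q)
        rw [one_div, Real.rpow_rpow_inv (abs_nonneg _) (ne_of_gt hq0)] at h4
        rwa [one_div]
      simp only [Function.comp_apply, Pi.mul_apply, Real.norm_eq_abs]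
      rw [abs_of_nonneg (mul_nonneg (Real.rpow_nonneg (hwpos t).le _) (abs_nonneg _))]
      calc w t ^ (1/q) * |F t| ≤ 1 * ((A + m * B) ^ (1/q)) :=
            mul_le_mul h2 h3 (abs_nonneg _) one_pos.le
        _ = (A + m * B) ^ (1/q) := one_mul _
    have H := MeasureTheory.integral_mul_le_Lp_mul_Lq_of_nonneg hpq
      (ae_of_all _ fun t => Real.rpow_nonneg (hwpos t).le (1/p))
      (ae_of_all _ fun t => mul_nonneg (Real.rpow_nonneg (hwpos t).le (1/q)) (abs_nonneg _))
      hmem1 hmem2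
    have e1 : ∀ t : ℝ, w t ^ (1/p) * (w t ^ (1/q) * |F t|) = w t * |F t| := by
      intro t
      rw [← mul_assoc, ← Real.rpow_add (hwpos t),
        show 1/p + 1/q = 1 by rw [one_div, one_div]; exact hpq.inv_add_inv_eq_one,
        Real.rpow_one]
    have e2 : ∀ t : ℝ, (w t ^ (1/p)) ^ p = w t := by
      intro t
      rw [← Real.rpow_mul (hwpos t).le, one_div_mul_cancel (ne_of_gt hp0), Real.rpow_one]
    have e3 : ∀ t : ℝ, (w t ^ (1/q) * |F t|) ^ q = w t * |F t| ^ q := by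
      intro t
      rw [Real.mul_rpow (Real.rpow_nonneg (hwpos t).le _) (abs_nonneg _),
        ← Real.rpow_mul (hwpos t).le, one_div_mul_cancel (ne_of_gt hq0), Real.rpow_one]
    rw [intervalIntegral.integral_of_le zero_le_one,
      intervalIntegral.integral_of_le zero_le_one,
      intervalIntegral.integral_of_le zero_le_one]
    have r1 : (∫ t in Set.Ioc (0:ℝ) 1, w t * |F t|)
        = ∫ t in Set.Ioc (0:ℝ) 1, w t ^ (1/p) * (w t ^ (1/q) * |F t|) :=
      integral_congr_ae (ae_of_all _ fun t => (e1 t).symm)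
    have r2 : (∫ t in Set.Ioc (0:ℝ) 1, (w t ^ (1/p)) ^ p)
        = ∫ t in Set.Ioc (0:ℝ) 1, w t :=
      integral_congr_ae (ae_of_all _ fun t => e2 t)
    have r3 : (∫ t in Set.Ioc (0:ℝ) 1, (w t ^ (1/q) * |F t|) ^ q)
        = ∫ t in Set.Ioc (0:ℝ) 1, w t * |F t| ^ q :=
      integral_congr_ae (ae_of_all _ fun t => e3 t)
    rw [r1, ← r2, ← r3]
    exact H
  -- moment integrals
  have hJ0 : (∫ t in (0:ℝ)..1, w t) = 1/3 := by
    simp only [hwdef]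
    rw [intervalIntegral.integral_add ((intervalIntegral.intervalIntegrable_pow 2).sub
        intervalIntegral.intervalIntegrable_id) intervalIntegrable_const,
      intervalIntegral.integral_sub (intervalIntegral.intervalIntegrable_pow 2)
        intervalIntegral.intervalIntegrable_id,
      integral_pow, integral_id, intervalIntegral.integral_const]
    norm_num
  have hJ : (∫ t in (0:ℝ)..1, w t * t ^ σ) = u₁ := by
    have n1 : σ + 1 ≠ 0 := by positivity
    have n2 : σ + 2 ≠ 0 := by positivity
    have n3 : σ + 3 ≠ 0 := by positivity
    have heq : Set.EqOn (fun t => w t * t ^ σ)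
        (fun t : ℝ => t ^ (σ + 2) - t ^ (σ + 1) + (1/2) * t ^ σ) (Set.uIcc (0:ℝ) 1) := by
      intro t ht
      rw [Set.uIcc_of_le zero_le_one] at ht
      have ht0 : (0:ℝ) ≤ t := ht.1
      have h2 : t ^ (σ + 2) = t ^ σ * t ^ (2:ℕ) := by
        rw [Real.rpow_add' ht0 (by positivity), show ((2:ℝ) = ((2:ℕ):ℝ)) by norm_num,
          Real.rpow_natCast]
      have h1 : t ^ (σ + 1) = t ^ σ * t := by
        rw [Real.rpow_add' ht0 (by positivity), Real.rpow_one]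
      simp only [hwdef]
      rw [h2, h1]
      ring
    rw [intervalIntegral.integral_congr heq]
    have i2 : IntervalIntegrable (fun t : ℝ => t ^ (σ + 2)) volume 0 1 :=
      intervalIntegral.intervalIntegrable_rpow' (by linarith)
    have i1 : IntervalIntegrable (fun t : ℝ => t ^ (σ + 1)) volume 0 1 :=
      intervalIntegral.intervalIntegrable_rpow' (by linarith)
    have i0 : IntervalIntegrable (fun t : ℝ => t ^ σ) volume 0 1 :=
      intervalIntegral.intervalIntegrable_rpow' (by linarith)
    rw [intervalIntegral.integral_add (i2.sub i1) (i0.const_mul _),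
      intervalIntegral.integral_sub i2 i1, intervalIntegral.integral_const_mul,
      integral_rpow (Or.inl (by linarith)), integral_rpow (Or.inl (by linarith)),
      integral_rpow (Or.inl (by linarith)),
      Real.one_rpow, Real.one_rpow, Real.one_rpow,
      Real.zero_rpow (by positivity), Real.zero_rpow (by positivity),
      Real.zero_rpow (by positivity), hu₁]
    field_simp
    ring
  -- comparisons
  have hmono1 : (∫ t in (0:ℝ)..1, |(1/2 - t) * F t|)
      ≤ ∫ t in (0:ℝ)..1, w t * |F t| := by
    apply intervalIntegral.integral_mono_on zero_le_one hint1.abs hint2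
    intro t ht
    rw [abs_mul]
    apply mul_le_mul_of_nonneg_right _ (abs_nonneg _)
    rw [abs_le]
    constructor
    · simp only [hwdef]; linarith [sq_nonneg (t - 1)]
    · simp only [hwdef]; linarith [sq_nonneg t]
  have hwbint : IntervalIntegrable (fun t => w t * (t ^ σ * A + m * (1 - t ^ σ) * B))
      volume 0 1 :=
    (hwcont.mul ((hσcont.mul continuous_const).add
      ((continuous_const.mul (continuous_const.sub hσcont)).mul
        continuous_const))).intervalIntegrable 0 1
  have hEval : (∫ t in (0:ℝ)..1, w t * (t ^ σ * A + m * (1 - t ^ σ) * B)) = V := by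
    have e : ∀ t : ℝ, w t * (t ^ σ * A + m * (1 - t ^ σ) * B)
        = A * (w t * t ^ σ) + (m * B) * w t - (m * B) * (w t * t ^ σ) := by
      intro t; ring
    have i0 : IntervalIntegrable (fun t : ℝ => w t * t ^ σ) volume 0 1 :=
      (hwcont.mul hσcont).intervalIntegrable 0 1
    rw [intervalIntegral.integral_congr (fun t _ => e t),
      intervalIntegral.integral_sub ((i0.const_mul A).add
        ((hwcont.intervalIntegrable 0 1).const_mul (m * B))) (i0.const_mul (m * B)),
      intervalIntegral.integral_add (i0.const_mul A)
        ((hwcont.intervalIntegrable 0 1).const_mul (m * B)),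
      intervalIntegral.integral_const_mul, intervalIntegral.integral_const_mul,
      intervalIntegral.integral_const_mul, hJ, hJ0, hVdef]
    ring
  have hmono2 : (∫ t in (0:ℝ)..1, w t * |F t| ^ q) ≤ V := by
    rw [← hEval]
    apply intervalIntegral.integral_mono_on zero_le_one hΦ hwbint
    intro t ht
    exact mul_le_mul_of_nonneg_left (hFb t ht) (hwpos t).le
  have hΦ0 : 0 ≤ ∫ t in (0:ℝ)..1, w t * |F t| ^ q :=
    intervalIntegral.integral_nonneg zero_le_one
      (fun t _ => mul_nonneg (hwpos t).le (Real.rpow_nonneg (abs_nonneg _) _))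
  have hIbound : |I| ≤ (1/3 : ℝ) ^ (1/p) * V ^ (1/q) := by
    rw [hIdef]
    calc |∫ t in (0:ℝ)..1, (1/2 - t) * F t| ≤ ∫ t in (0:ℝ)..1, |(1/2 - t) * F t| :=
          intervalIntegral.abs_integral_le_integral_abs zero_le_one
      _ ≤ ∫ t in (0:ℝ)..1, w t * |F t| := hmono1
      _ ≤ (∫ t in (0:ℝ)..1, w t) ^ (1/p) * (∫ t in (0:ℝ)..1, w t * |F t| ^ q) ^ (1/q) := holder
      _ = (1/3 : ℝ) ^ (1/p) * (∫ t in (0:ℝ)..1, w t * |F t| ^ q) ^ (1/q) := by rw [hJ0]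
      _ ≤ (1/3 : ℝ) ^ (1/p) * V ^ (1/q) :=
          mul_le_mul_of_nonneg_left (Real.rpow_le_rpow hΦ0 hmono2 (by positivity))
            (Real.rpow_nonneg (by norm_num) _)
  rw [key, abs_mul, abs_of_pos hba]
  calc (b - a) * |I| ≤ (b - a) * ((1/3 : ℝ) ^ (1/p) * V ^ (1/q)) :=
        mul_le_mul_of_nonneg_left hIbound hba.le
    _ = ((b - a) / 3 ^ (1/p)) * V ^ (1/q) := by
        rw [show ((1:ℝ)/3) = (3:ℝ)⁻¹ by norm_num,
          Real.inv_rpow (by norm_num : (0:ℝ) ≤ 3), div_eq_mul_inv]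
        ring
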